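/- For every n ≥ 10, every period k ≥ 1 of the set S_n = {a ∈ ℕ : there exists b with 1 < b < 2^n and b divides a} satisfies k ≥ 2^(2^n − 1). -/

import Mathlib

namespace PeriodAux
open Nat Finset

lemma core_ineq (t : ℕ) (ht : 2 ≤ t) :
    61509375 * (2 ^ 39 * ((15 * t + 1).ascFactorial 15 *
      ((10 * t + 1).ascFactorial 10 * (6 * t + 1).ascFactorial 6))) ≤
    61509375 * ((t + 1) * (30 * t + 1).ascFactorial 30) := by
  have hlast : (16777216 * ((10 * t + 10) * (6 * t + 6))) ≤ (61509375 * ((t + 1) * (30 * t + 1))) := by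
    nlinarith [ht]
  calc 61509375 * (2 ^ 39 * ((15 * t + 1).ascFactorial 15 *
      ((10 * t + 1).ascFactorial 10 * (6 * t + 1).ascFactorial 6)))
      = (2 * (15 * t + 1)) * (2 * (15 * t + 2)) * (2 * (15 * t + 3)) * (2 * (15 * t + 4)) * (2 * (15 * t + 5)) * (2 * (15 * t + 6)) * (2 * (15 * t + 7)) * (2 * (15 * t + 8)) * (2 * (15 * t + 9)) * (2 * (15 * t + 10)) * (2 * (15 * t + 11)) * (2 * (15 * t + 12)) * (2 * (15 * t + 13)) * (2 * (15 * t + 14)) * (2 * (15 * t + 15)) * (3 * (10 * t + 1)) * (3 * (10 * t + 3)) * (3 * (10 * t + 5)) * (3 * (10 * t + 7)) * (3 * (10 * t + 9)) * (3 * (10 * t + 2)) * (3 * (10 * t + 4)) * (3 * (10 * t + 6)) * (3 * (10 * t + 8)) * (5 * (6 * t + 1)) * (5 * (6 * t + 2)) * (5 * (6 * t + 3)) * (5 * (6 * t + 4)) * (5 * (6 * t + 5)) * (16777216 * ((10 * t + 10) * (6 * t + 6))) := by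
        simp only [Nat.ascFactorial_succ, Nat.ascFactorial_zero]
        ring
    _ ≤ (30 * t + 2) * (30 * t + 4) * (30 * t + 6) * (30 * t + 8) * (30 * t + 10) * (30 * t + 12) * (30 * t + 14) * (30 * t + 16) * (30 * t + 18) * (30 * t + 20) * (30 * t + 22) * (30 * t + 24) * (30 * t + 26) * (30 * t + 28) * (30 * t + 30) * (30 * t + 3) * (30 * t + 9) * (30 * t + 15) * (30 * t + 21) * (30 * t + 27) * (30 * t + 7) * (30 * t + 13) * (30 * t + 19) * (30 * t + 29) * (30 * t + 5) * (30 * t + 11) * (30 * t + 17) * (30 * t + 23) * (30 * t + 25) * (61509375 * ((t + 1) * (30 * t + 1))) := (Nat.mul_le_mul (Nat.mul_le_mul (Nat.mul_le_mul (Nat.mul_le_mul (Nat.mul_le_mul (Nat.mul_le_mul (Nat.mul_le_mul (Nat.mul_le_mul (Nat.mul_le_mul (Nat.mul_le_mul (Nat.mul_le_mul (Nat.mul_le_mul (Nat.mul_le_mul (Nat.mul_le_mul (Nat.mul_le_mul (Nat.mul_le_mul (Nat.mul_le_mul (Nat.mul_le_mul (Nat.mul_le_mul (Nat.mul_le_mul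 (Nat.mul_le_mul (Nat.mul_le_mul (Nat.mul_le_mul (Nat.mul_le_mul (Nat.mul_le_mul (Nat.mul_le_mul (Nat.mul_le_mul (Nat.mul_le_mul (Nat.mul_le_mul (by omega : (2 * (15 * t + 1)) ≤ (30 * t + 2)) (by omega : (2 * (15 * t + 2)) ≤ (30 * t + 4))) (by omega : (2 * (15 * t + 3)) ≤ (30 * t + 6))) (by omega : (2 * (15 * t + 4)) ≤ (30 * t + 8))) (by omega : (2 * (15 * t + 5)) ≤ (30 * t + 10))) (by omega : (2 * (15 * t + 6)) ≤ (30 * t + 12))) (by omega : (2 * (15 * t + 7)) ≤ (30 * t + 14))) (by omega : (2 * (15 * t + 8)) ≤ (30 * t + 16))) (by omega : (2 * (15 * t + 9)) ≤ (30 * t + 18))) (by omega : (2 * (15 * t + 10)) ≤ (30 * t + 20))) (by omega : (2 * (15 * t + 11)) ≤ (30 * t + 22))) (by omega : (2 * (15 * t + 12)) ≤ (30 * t + 24))) (by omega : (2 * (15 * t + 13)) ≤ (30 * t + 26))) (by omega : (2 * (15 * t + 14)) ≤ (30 * t + 28))) (by omega : (2 * (15 * t + 15)) ≤ (30 * t +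 30))) (by omega : (3 * (10 * t + 1)) ≤ (30 * t + 3))) (by omega : (3 * (10 * t + 3)) ≤ (30 * t + 9))) (by omega : (3 * (10 * t + 5)) ≤ (30 * t + 15))) (by omega : (3 * (10 * t + 7)) ≤ (30 * t + 21))) (by omega : (3 * (10 * t + 9)) ≤ (30 * t + 27))) (by omega : (3 * (10 * t + 2)) ≤ (30 * t + 7))) (by omega : (3 * (10 * t + 4)) ≤ (30 * t + 13))) (by omega : (3 * (10 * t + 6)) ≤ (30 * t + 19))) (by omega : (3 * (10 * t + 8)) ≤ (30 * t + 29))) (by omega : (5 * (6 * t + 1)) ≤ (30 * t + 5))) (by omega : (5 * (6 * t + 2)) ≤ (30 * t + 11))) (by omega : (5 * (6 * t + 3)) ≤ (30 * t + 17))) (by omega : (5 * (6 * t + 4)) ≤ (30 * t + 23))) (by omega : (5 * (6 * t + 5)) ≤ (30 * t + 25))) hlast)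
    _ = 61509375 * ((t + 1) * (30 * t + 1).ascFactorial 30) := by
        simp only [Nat.ascFactorial_succ, Nat.ascFactorial_zero]
        ring

def FF (t : ℕ) : ℕ := (30 * t)! * t !
def GG (t : ℕ) : ℕ := (15 * t)! * ((10 * t)! * (6 * t)!)
def RR (M : ℕ) : ℕ := ∏ p ∈ (M + 1).primesBelow, p ^ (Nat.log p M)

lemma keyC (t : ℕ) (ht : 2 ≤ t) : 2 ^ 39 * GG (t + 1) * FF t ≤ FF (t + 1) * GG t := by
  have core : 2 ^ 39 * ((15 * t + 1).ascFactorial 15 *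
      ((10 * t + 1).ascFactorial 10 * (6 * t + 1).ascFactorial 6)) ≤
      (t + 1) * (30 * t + 1).ascFactorial 30 :=
    Nat.le_of_mul_le_mul_left (core_ineq t ht) (by norm_num)
  unfold FF GG
  simp only [Nat.mul_succ]
  rw [← Nat.factorial_mul_ascFactorial (30 * t) 30, ← Nat.factorial_mul_ascFactorial (15 * t) 15,
    ← Nat.factorial_mul_ascFactorial (10 * t) 10, ← Nat.factorial_mul_ascFactorial (6 * t) 6,
    Nat.factorial_succ]
  calc 2 ^ 39 * ((15 * t)! * (15 * t + 1).ascFactorial 15 *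
        ((10 * t)! * (10 * t + 1).ascFactorial 10 * ((6 * t)! * (6 * t + 1).ascFactorial 6))) *
        ((30 * t)! * t !)
      = ((30 * t)! * ((15 * t)! * ((10 * t)! * (6 * t)!)) * t !) *
        (2 ^ 39 * ((15 * t + 1).ascFactorial 15 *
          ((10 * t + 1).ascFactorial 10 * (6 * t + 1).ascFactorial 6))) := by ring
    _ ≤ ((30 * t)! * ((15 * t)! * ((10 * t)! * (6 * t)!)) * t !) *
        ((t + 1) * (30 * t + 1).ascFactorial 30) := Nat.mul_le_mul_left _ core
    _ = (30 * t)! * (30 * t + 1).ascFactorial 30 * ((t + 1) * t !) *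
        ((15 * t)! * ((10 * t)! * (6 * t)!)) := by ring

lemma grow (t : ℕ) (ht : 2 ≤ t) : 2 ^ (39 * (t - 2)) * GG t * FF 2 ≤ FF t * GG 2 := by
  induction t, ht using Nat.le_induction with
  | base => simp [Nat.mul_le_mul_left]; exact le_of_eq (by ring)
  | succ t ht ih =>
    have hFpos : 0 < FF t := Nat.mul_pos (Nat.factorial_pos _) (Nat.factorial_pos _)
    have hGpos : 0 < GG t :=
      Nat.mul_pos (Nat.factorial_pos _) (Nat.mul_pos (Nat.factorial_pos _) (Nat.factorial_pos _))
    have hstep := keyC t ht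
    have hexp : 39 * (t + 1 - 2) = 39 * (t - 2) + 39 := by omega
    refine Nat.le_of_mul_le_mul_right ?_ (Nat.mul_pos hFpos hGpos)
    calc 2 ^ (39 * (t + 1 - 2)) * GG (t + 1) * FF 2 * (FF t * GG t)
        = (2 ^ 39 * GG (t + 1) * FF t) * (2 ^ (39 * (t - 2)) * GG t * FF 2) := by
          rw [hexp, pow_add]; ring
      _ ≤ (FF (t + 1) * GG t) * (FF t * GG 2) :=
          Nat.mul_le_mul hstep ih
      _ = FF (t + 1) * GG 2 * (FF t * GG t) := by ring

lemma div_mul_div (a c n : ℕ) (hc : 0 < c) : a * c / n / c = a / n := by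
  rw [Nat.div_div_eq_div_mul, Nat.mul_comm n c, ← Nat.div_div_eq_div_mul,
    Nat.mul_div_cancel _ hc]

lemma val_le (p t : ℕ) (hp : p.Prime) (ht : 0 < t) :
    (FF t).factorization p ≤ (GG t).factorization p + Nat.log p (30 * t) := by
  haveI : Fact p.Prime := ⟨hp⟩
  unfold FF GG
  rw [Nat.factorization_mul (factorial_ne_zero _) (factorial_ne_zero _),
    Nat.factorization_mul (factorial_ne_zero _)
      (Nat.mul_ne_zero (factorial_ne_zero _) (factorial_ne_zero _)),
    Nat.factorization_mul (factorial_ne_zero _) (factorial_ne_zero _)]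
  simp only [Finsupp.add_apply]
  rw [Nat.factorization_def _ hp, Nat.factorization_def _ hp, Nat.factorization_def _ hp,
    Nat.factorization_def _ hp, Nat.factorization_def _ hp]
  set b := Nat.log p (30 * t) + 1 with hb
  have hlt : ∀ m : ℕ, 0 < m → m ≤ 30 * t → Nat.log p m < b := fun m hm hmle => by
    have := Nat.log_mono_right (b := p) hmle
    omega
  rw [padicValNat_factorial (hlt _ (by positivity) (by omega)),
    padicValNat_factorial (hlt _ (by omega) (by omega)),
    padicValNat_factorial (hlt _ (by positivity) (by omega)),
    padicValNat_factorial (hlt _ (by positivity) (by omega)),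
    padicValNat_factorial (hlt _ (by positivity) (by omega))]
  have hper : ∀ i ∈ Finset.Ico 1 b,
      30 * t / p ^ i + t / p ^ i ≤ 15 * t / p ^ i + (10 * t / p ^ i + 6 * t / p ^ i) + 1 := by
    intro i _
    have h2 : 15 * t / p ^ i = 30 * t / p ^ i / 2 := by
      rw [show (30 : ℕ) * t = 15 * t * 2 by ring, div_mul_div _ _ _ (by norm_num)]
    have h3 : 10 * t / p ^ i = 30 * t / p ^ i / 3 := by
      rw [show (30 : ℕ) * t = 10 * t * 3 by ring, div_mul_div _ _ _ (by norm_num)]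
    have h5 : 6 * t / p ^ i = 30 * t / p ^ i / 5 := by
      rw [show (30 : ℕ) * t = 6 * t * 5 by ring, div_mul_div _ _ _ (by norm_num)]
    have h30 : t / p ^ i = 30 * t / p ^ i / 30 := by
      rw [show (30 : ℕ) * t = t * 30 by ring, div_mul_div _ _ _ (by norm_num)]
    rw [h2, h3, h5, h30]
    omega
  calc (∑ i ∈ Finset.Ico 1 b, 30 * t / p ^ i) + ∑ i ∈ Finset.Ico 1 b, t / p ^ i
      = ∑ i ∈ Finset.Ico 1 b, (30 * t / p ^ i + t / p ^ i) := by
        rw [Finset.sum_add_distrib]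
    _ ≤ ∑ i ∈ Finset.Ico 1 b, (15 * t / p ^ i + (10 * t / p ^ i + 6 * t / p ^ i) + 1) :=
        Finset.sum_le_sum hper
    _ = ((∑ i ∈ Finset.Ico 1 b, 15 * t / p ^ i) +
          ((∑ i ∈ Finset.Ico 1 b, 10 * t / p ^ i) + ∑ i ∈ Finset.Ico 1 b, 6 * t / p ^ i)) +
          ∑ i ∈ Finset.Ico 1 b, 1 := by
        rw [Finset.sum_add_distrib, Finset.sum_add_distrib, Finset.sum_add_distrib]
    _ = _ := by
        rw [Finset.sum_const, Nat.card_Ico, smul_eq_mul, mul_one]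
        omega

lemma RR_pos (M : ℕ) : 0 < RR M :=
  Finset.prod_pos fun p hp => pow_pos (Nat.mem_primesBelow.mp hp).2.pos _

lemma RR_factorization (M : ℕ) (p : ℕ) (hp : p.Prime) (hpM : p ≤ M) :
    (RR M).factorization p = Nat.log p M := by
  unfold RR
  rw [Nat.factorization_prod (fun q hq => pow_ne_zero _ (Nat.mem_primesBelow.mp hq).2.pos.ne')]
  rw [Finset.sum_apply']
  rw [Finset.sum_eq_single p]
  · rw [Nat.Prime.factorization_pow hp, Finsupp.single_apply]
    simp
  · intro q hq hqp
    rw [Nat.Prime.factorization_pow (Nat.mem_primesBelow.mp hq).2, Finsupp.single_apply]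
    simp [hqp]
  · intro hpnot
    exact absurd (Nat.mem_primesBelow.mpr ⟨by omega, hp⟩) hpnot

lemma F_le_GR (t : ℕ) (ht : 0 < t) : FF t ≤ GG t * RR (30 * t) := by
  have hF : FF t ≠ 0 := Nat.mul_ne_zero (factorial_ne_zero _) (factorial_ne_zero _)
  have hG : GG t ≠ 0 := Nat.mul_ne_zero (factorial_ne_zero _)
    (Nat.mul_ne_zero (factorial_ne_zero _) (factorial_ne_zero _))
  have hGR : GG t * RR (30 * t) ≠ 0 := Nat.mul_ne_zero hG (RR_pos _).ne'
  refine Nat.le_of_dvd (Nat.pos_of_ne_zero hGR) ?_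
  rw [← Nat.factorization_le_iff_dvd hF hGR]
  intro p
  by_cases hp : p.Prime
  · by_cases hpM : p ≤ 30 * t
    · rw [Nat.factorization_mul hG (RR_pos _).ne', Finsupp.add_apply,
        RR_factorization _ _ hp hpM]
      exact val_le p t hp ht
    · have : (FF t).factorization p = 0 := by
        rw [Nat.factorization_eq_zero_iff]
        right; left
        intro hdvd
        rcases (Nat.Prime.dvd_mul hp).mp hdvd with h | h
        · exact hpM ((Nat.Prime.dvd_factorial hp).mp h)
        · exact hpM (le_trans ((Nat.Prime.dvd_factorial hp).mp h) (by omega))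
      simp [this]
  · simp [Nat.factorization_eq_zero_of_not_prime _ hp]

lemma GG_pos (t : ℕ) : 0 < GG t :=
  Nat.mul_pos (factorial_pos _) (Nat.mul_pos (factorial_pos _) (factorial_pos _))

lemma R_lb (t : ℕ) (ht : 2 ≤ t) : 2 ^ (39 * t - 3) ≤ RR (30 * t) := by
  have h1 := grow t ht
  have h2 := F_le_GR t (by omega)
  have hF2 : 2 ^ 75 * GG 2 ≤ FF 2 := by
    unfold FF GG; norm_num [Nat.factorial]
  have hexp : 39 * t - 3 = 39 * (t - 2) + 75 := by omega
  refine Nat.le_of_mul_le_mul_right ?_ (Nat.mul_pos (GG_pos t) (GG_pos 2))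
  calc 2 ^ (39 * t - 3) * (GG t * GG 2)
      = 2 ^ (39 * (t - 2)) * (2 ^ 75 * GG 2) * GG t := by rw [hexp, pow_add]; ring
    _ ≤ 2 ^ (39 * (t - 2)) * FF 2 * GG t :=
        Nat.mul_le_mul_right _ (Nat.mul_le_mul_left _ hF2)
    _ = 2 ^ (39 * (t - 2)) * GG t * FF 2 := by ring
    _ ≤ FF t * GG 2 := h1
    _ ≤ GG t * RR (30 * t) * GG 2 := Nat.mul_le_mul_right _ h2
    _ = RR (30 * t) * (GG t * GG 2) := by ring

lemma R_le (M : ℕ) (hM : 1 ≤ M) :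
    RR M ≤ primorial M * M ^ (((M + 1).primesBelow.filter (fun p => p ^ 2 ≤ M)).card) := by
  have hstep : ∀ p ∈ (M + 1).primesBelow,
      p ^ (Nat.log p M) ≤ p * (if p ^ 2 ≤ M then M else 1) := by
    intro p hp
    obtain ⟨hplt, hpp⟩ := Nat.mem_primesBelow.mp hp
    by_cases h2 : p ^ 2 ≤ M
    · simp only [h2, if_pos]
      have hple : p ≤ M := le_trans (Nat.le_self_pow two_ne_zero p) h2
      have hlog : 1 ≤ Nat.log p M := Nat.log_pos hpp.one_lt hple
      calc p ^ Nat.log p M = p * p ^ (Nat.log p M - 1) := by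
            rw [← _root_.pow_succ']
            congr 1
            omega
        _ ≤ p * M := Nat.mul_le_mul_left _
            (le_trans (Nat.pow_le_pow_right hpp.pos (by omega)) (Nat.pow_log_le_self p (by omega)))
    · simp only [h2, if_neg, not_false_iff, mul_one]
      have : Nat.log p M ≤ 1 := by
        by_contra hgt
        exact h2 (le_trans (Nat.pow_le_pow_right hpp.pos (by omega)) (Nat.pow_log_le_self p (by omega)))
      calc p ^ Nat.log p M ≤ p ^ 1 := Nat.pow_le_pow_right hpp.pos this
        _ = p := pow_one p
  calc RR M ≤ ∏ p ∈ (M + 1).primesBelow, p * (if p ^ 2 ≤ M then M else 1) :=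
        Finset.prod_le_prod (fun _ _ => Nat.zero_le _) hstep
    _ = (∏ p ∈ (M + 1).primesBelow, p) *
        ∏ p ∈ (M + 1).primesBelow, (if p ^ 2 ≤ M then M else 1) := by
        rw [Finset.prod_mul_distrib]
    _ = (∏ p ∈ (M + 1).primesBelow, p) *
        M ^ (((M + 1).primesBelow.filter (fun p => p ^ 2 ≤ M)).card) := by
        rw [Finset.prod_ite, Finset.prod_const, Finset.prod_const, one_pow, mul_one]
    _ = primorial M * M ^ _ := by
        rw [primorial]
        rfl

lemma card_primesBelow_le (X : ℕ) : ((X + 1).primesBelow).card ≤ X / 2 + 1 := by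
  set s := (X + 1).primesBelow with hs
  have h1 : (s.erase 2).card ≤ (Finset.Icc 1 (X / 2)).card := by
    apply Finset.card_le_card_of_injOn (fun p => p / 2)
    · intro p hp
      obtain ⟨hpne, hpmem⟩ := Finset.mem_erase.mp hp
      obtain ⟨hplt, hpp⟩ := Nat.mem_primesBelow.mp hpmem
      have hodd : p % 2 = 1 := Nat.odd_iff.mp (hpp.odd_of_ne_two hpne)
      have hp2 : 2 ≤ p := hpp.two_le
      simp only [Finset.coe_Icc, Set.mem_Icc, Finset.mem_coe, Finset.mem_Icc]
      omega
    · intro p hp q hq hpq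
      obtain ⟨hpne, hpmem⟩ := Finset.mem_erase.mp hp
      obtain ⟨hqne, hqmem⟩ := Finset.mem_erase.mp hq
      have hoddp : p % 2 = 1 :=
        Nat.odd_iff.mp ((Nat.mem_primesBelow.mp hpmem).2.odd_of_ne_two hpne)
      have hoddq : q % 2 = 1 :=
        Nat.odd_iff.mp ((Nat.mem_primesBelow.mp hqmem).2.odd_of_ne_two hqne)
      simp only at hpq
      omega
  have h2 : (Finset.Icc 1 (X / 2)).card = X / 2 := by
    rw [Nat.card_Icc]
    omega
  have h3 : s.card ≤ (s.erase 2).card + 1 := by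
    by_cases h : 2 ∈ s
    · rw [Finset.card_erase_of_mem h]
      omega
    · rw [Finset.erase_eq_of_notMem h]
      omega
  omega

lemma primorial_mono {a b : ℕ} (h : a ≤ b) : primorial a ≤ primorial b := by
  rw [primorial, primorial]
  apply Finset.prod_le_prod_of_subset_of_one_le'
  · exact Finset.filter_subset_filter _ (Finset.range_subset_range.mpr (by omega))
  · intro p hp _
    exact (Finset.mem_filter.mp hp).2.one_lt.le

lemma h410 (n : ℕ) (hn : 10 ≤ n) : 410 + 10 * n ≤ 2 ^ n := by
  induction n, hn using Nat.le_induction with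
  | base => norm_num
  | succ n hn ih =>
    have : 2 ^ (n + 1) = 2 * 2 ^ n := by ring
    omega

lemma h20u (u : ℕ) (hu : 7 ≤ u) : 20 * u ≤ 30 + 2 ^ u := by
  induction u, hu using Nat.le_induction with
  | base => norm_num
  | succ u hu ih =>
    have : 2 ^ (u + 1) = 2 * 2 ^ u := by ring
    omega

lemma primorial_lb (n : ℕ) (hn : 10 ≤ n) : 2 ^ (2 ^ n - 1) ≤ primorial (2 ^ n - 1) := by
  set E := 2 ^ n with hE
  have hE1024 : 1024 ≤ E := by
    calc (1024 : ℕ) = 2 ^ 10 := by norm_num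
      _ ≤ 2 ^ n := Nat.pow_le_pow_right (by norm_num) hn
  set t := (E - 1) / 30 with htdef
  have ht2 : 2 ≤ t := by omega
  have h30t : 30 * t ≤ E - 1 := by omega
  have h30t' : E - 30 ≤ 30 * t := by omega
  -- c and u
  set c := (n + 1) / 2 - 1 with hcdef
  have hc5 : 4 ≤ c := by omega
  have hn2c : n ≤ 2 * (c + 1) := by omega
  set u := n + 1 - c with hudef
  have hu7 : 7 ≤ u := by omega
  -- s bound
  set s := (((30 * t) + 1).primesBelow.filter (fun p => p ^ 2 ≤ 30 * t)).card with hsdef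
  have hsub : ((30 * t) + 1).primesBelow.filter (fun p => p ^ 2 ≤ 30 * t) ⊆
      (2 ^ (c + 1) + 1).primesBelow := by
    intro p hp
    obtain ⟨hpmem, hp2⟩ := Finset.mem_filter.mp hp
    obtain ⟨hplt, hpp⟩ := Nat.mem_primesBelow.mp hpmem
    have hpX : p ≤ 2 ^ (c + 1) := by
      have h1 : p ^ 2 ≤ (2 ^ (c + 1)) ^ 2 := by
        calc p ^ 2 ≤ 30 * t := hp2
          _ ≤ E := by omega
          _ ≤ 2 ^ (2 * (c + 1)) := Nat.pow_le_pow_right (by norm_num) hn2c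
          _ = (2 ^ (c + 1)) ^ 2 := by rw [← pow_mul, Nat.mul_comm]
      exact (Nat.pow_le_pow_iff_left (by norm_num)).mp h1
    exact Nat.mem_primesBelow.mpr ⟨by omega, hpp⟩
  have hs : s ≤ 2 ^ c + 1 := by
    have := card_primesBelow_le (2 ^ (c + 1))
    have hdiv : 2 ^ (c + 1) / 2 = 2 ^ c := by
      rw [pow_succ, Nat.mul_div_cancel _ (by norm_num)]
    calc s ≤ ((2 ^ (c + 1) + 1).primesBelow).card := Finset.card_le_card hsub
      _ ≤ 2 ^ (c + 1) / 2 + 1 := this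
      _ = 2 ^ c + 1 := by rw [hdiv]
  -- numeric bound: (E - 1) + n * s + 3 ≤ 39 * t
  have hnum : (E - 1) + n * s + 3 ≤ 39 * t := by
    have hA : 10 * (n * 2 ^ c) ≤ 2 * E := by
      have h1 : 10 * n ≤ 2 ^ u := by
        have := h20u u hu7
        have h2 : 20 * u ≥ 20 * 7 := by omega
        -- n ≤ 2u - 3
        have hn2u : n + 3 ≤ 2 * u := by omega
        calc 10 * n ≤ 20 * u - 30 := by omega
          _ ≤ 2 ^ u := by omega
      calc 10 * (n * 2 ^ c) = (10 * n) * 2 ^ c := by ring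
        _ ≤ 2 ^ u * 2 ^ c := Nat.mul_le_mul_right _ h1
        _ = 2 ^ (u + c) := by rw [← pow_add]
        _ = 2 * E := by
            rw [hE, show u + c = n + 1 by omega, pow_succ]
            ring
    have hB := h410 n hn
    have hns : n * s ≤ n * 2 ^ c + n := by
      calc n * s ≤ n * (2 ^ c + 1) := Nat.mul_le_mul_left _ hs
        _ = n * 2 ^ c + n := by ring
    omega
  -- assemble
  have key1 : 2 ^ (39 * t - 3) ≤ RR (30 * t) := R_lb t ht2
  have key2 : RR (30 * t) ≤ primorial (30 * t) * (30 * t) ^ s :=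
    R_le (30 * t) (by omega)
  have key3 : (30 * t) ^ s ≤ E ^ s := Nat.pow_le_pow_left (by omega) s
  have key4 : primorial (30 * t) ≤ primorial (E - 1) := primorial_mono (by omega)
  have hEs : 0 < E ^ s := pow_pos (by omega) s
  refine Nat.le_of_mul_le_mul_right ?_ hEs
  calc 2 ^ (E - 1) * E ^ s = 2 ^ (E - 1) * 2 ^ (n * s) := by
        rw [hE, ← pow_mul]
    _ = 2 ^ ((E - 1) + n * s) := by rw [← pow_add]
    _ ≤ 2 ^ (39 * t - 3) := Nat.pow_le_pow_right (by norm_num) (by omega)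
    _ ≤ RR (30 * t) := key1
    _ ≤ primorial (30 * t) * (30 * t) ^ s := key2
    _ ≤ primorial (E - 1) * E ^ s := Nat.mul_le_mul key4 key3

end PeriodAux

open Nat Finset PeriodAux

/-- `p` is a period of `S ⊆ ℕ`. -/
def IsPeriodNat (S : Set ℕ) (p : ℕ) : Prop :=
  ∃ n₀ : ℕ, ∀ a : ℕ, n₀ ≤ a → (a + p ∈ S ↔ a ∈ S)

theorem period_lower_bound (n : ℕ) (hn : 10 ≤ n) (k : ℕ) (hk : 1 ≤ k)
    (hper : IsPeriodNat {a : ℕ | ∃ b : ℕ, 1 < b ∧ b < 2 ^ n ∧ b ∣ a} k) :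
    2 ^ (2 ^ n - 1) ≤ k := by
  obtain ⟨n₀, hn₀⟩ := hper
  have hpdvd : ∀ p : ℕ, p.Prime → p < 2 ^ n → p ∣ k := by
    intro p hp hplt
    by_contra hnd
    obtain ⟨q, hq_ge, hq⟩ := Nat.exists_infinite_primes (max n₀ (2 ^ n) + 1)
    have hqn₀ : n₀ ≤ q := by
      have := le_max_left n₀ (2 ^ n); omega
    have hq2n : 2 ^ n < q := by
      have := le_max_right n₀ (2 ^ n); omega
    have hqS : q ∉ {a : ℕ | ∃ b : ℕ, 1 < b ∧ b < 2 ^ n ∧ b ∣ a} := by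
      rintro ⟨b, hb1, hb2, hbd⟩
      rcases (Nat.Prime.eq_one_or_self_of_dvd hq b hbd) with rfl | rfl
      · omega
      · omega
    have hjS : ∀ j : ℕ, q + j * k ∉ {a : ℕ | ∃ b : ℕ, 1 < b ∧ b < 2 ^ n ∧ b ∣ a} := by
      intro j
      induction j with
      | zero => simpa using hqS
      | succ j ih =>
        have hmem := hn₀ (q + j * k) (by omega)
        intro hin
        apply ih
        apply hmem.mp
        have : q + (j + 1) * k = q + j * k + k := by ring
        rwa [this] at hin
    haveI : Fact p.Prime := ⟨hp⟩
    have hk0 : (k : ZMod p) ≠ 0 := by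
      rw [Ne, ZMod.natCast_eq_zero_iff]
      exact hnd
    set u : ZMod p := (-(q : ZMod p)) * (k : ZMod p)⁻¹ with hu
    have hcast : ((q + u.val * k : ℕ) : ZMod p) = 0 := by
      push_cast
      rw [ZMod.natCast_val, ZMod.cast_id, hu]
      field_simp
      ring
    have hdvd : p ∣ q + u.val * k := by
      rwa [ZMod.natCast_eq_zero_iff] at hcast
    exact hjS u.val ⟨p, hp.one_lt, hplt, hdvd⟩
  -- primorial divides k
  have hprim : primorial (2 ^ n - 1) ∣ k := by
    rw [primorial]
    apply Finset.prod_primes_dvd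
    · intro p hp
      simp only [Finset.mem_filter] at hp
      exact hp.2.prime
    · intro p hp
      simp only [Finset.mem_filter, Finset.mem_range] at hp
      have h1 : (1:ℕ) ≤ 2 ^ n := Nat.one_le_two_pow
      exact hpdvd p hp.2 (by omega)
  calc 2 ^ (2 ^ n - 1) ≤ primorial (2 ^ n - 1) := primorial_lb n hn
    _ ≤ k := Nat.le_of_dvd (by omega) hprim
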